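/- In the Mathieu group M₁₁, the element s = (1 9 7 10 8 11 5 4 3 6 2) of order 11 is conjugate to both s³ and s⁹, and s³ ≠ s⁹. -/
import Mathlib
set_option maxRecDepth 10000


/-- The Mathieu group `M₁₁ ≤ S₁₁` (points `1,…,11` encoded as `0,…,10`). -/
def M11 : Subgroup (Equiv.Perm (Fin 11)) :=
  Subgroup.closure {c[0, 1, 2, 3, 4, 5, 6, 7, 8, 9, 10], c[2, 6, 10, 7] * c[3, 9, 4, 5]}

/-- `s = (1 9 7 10 8 11 5 4 3 6 2)`. -/
def s2 : Equiv.Perm (Fin 11) := c[0, 8, 6, 9, 7, 10, 4, 3, 2, 5, 1]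

private def aa : Equiv.Perm (Fin 11) := c[0, 1, 2, 3, 4, 5, 6, 7, 8, 9, 10]
private def bb : Equiv.Perm (Fin 11) := c[2, 6, 10, 7] * c[3, 9, 4, 5]

private lemma haa : aa ∈ M11 :=
  Subgroup.subset_closure (Set.mem_insert _ _)

private lemma hbb : bb ∈ M11 :=
  Subgroup.subset_closure (Set.mem_insert_of_mem _ rfl)

/-- `s` has order 11, is conjugate in `M₁₁` to both `s³` and `s⁹`, and `s³ ≠ s⁹`. -/
theorem stmt10 :
    s2 ∈ M11 ∧ orderOf s2 = 11 ∧
    (∃ g ∈ M11, g * s2 * g⁻¹ = s2 ^ 3) ∧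
    (∃ g ∈ M11, g * s2 * g⁻¹ = s2 ^ 9) ∧
    s2 ^ 3 ≠ s2 ^ 9 := by
  haveI : Fact (Nat.Prime 11) := ⟨by norm_num⟩
  refine ⟨?_, ?_, ⟨bb*bb*aa*aa*aa*aa*bb*aa*aa*bb, ?_, by decide⟩,
    ⟨aa*aa*bb*aa*aa*bb*bb*bb*aa, ?_, by decide⟩, by decide⟩
  · have h : s2 = bb*aa*bb*aa*bb*aa*aa*aa*bb := by decide
    rw [h]
    exact mul_mem (mul_mem (mul_mem (mul_mem (mul_mem (mul_mem (mul_mem (mul_mem hbb haa) hbb) haa) hbb) haa) haa) haa) hbb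
  · exact orderOf_eq_prime (by decide) (by decide)
  · exact mul_mem (mul_mem (mul_mem (mul_mem (mul_mem (mul_mem (mul_mem (mul_mem (mul_mem hbb hbb) haa) haa) haa) haa) hbb) haa) haa) hbb
  · exact mul_mem (mul_mem (mul_mem (mul_mem (mul_mem (mul_mem (mul_mem (mul_mem haa haa) hbb) haa) haa) hbb) hbb) hbb) haa
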